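/- Let G be a graph with no 5-hole and with ω(G) ≥ 2, and let n ≥ 1 be an integer such that every induced subgraph H of G with ω(H) < ω(G) satisfies χ(H) ≤ n. Then for every vertex v of G, χ(N(v)) ≤ n and χ(N²(v)) ≤ n². -/

import Mathlib

/-- `G` has an induced cycle of length `n`. -/
def HasInducedCycle {V : Type*} (G : SimpleGraph V) (n : ℕ) : Prop :=
  Nonempty (SimpleGraph.cycleGraph n ↪g G)

/-- The set of vertices of `G` at distance exactly `r` from `v`. -/
def distSet {V : Type*} (G : SimpleGraph V) (v : V) (r : ℕ) : Set V :=
  {u | G.dist v u = r}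

open SimpleGraph

lemma hasC5 {V : Type*} (G : SimpleGraph V) (a b c d e : V)
    (hab : G.Adj a b) (hbc : G.Adj b c) (hcd : G.Adj c d) (hde : G.Adj d e)
    (hea : G.Adj e a) (hac : ¬ G.Adj a c) (had : ¬ G.Adj a d)
    (hbd : ¬ G.Adj b d) (hbe : ¬ G.Adj b e) (hce : ¬ G.Adj c e) :
    HasInducedCycle G 5 := by
  have nac : a ≠ c := by rintro rfl; exact had hcd
  have nad : a ≠ d := by rintro rfl; exact hac hcd.symm
  have nbd : b ≠ d := by rintro rfl; exact hbe hde
  have nbe : b ≠ e := by rintro rfl; exact hbd hde.symm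
  have nce : c ≠ e := by rintro rfl; exact hbe hbc
  refine ⟨⟨⟨![a,b,c,d,e], ?_⟩, ?_⟩⟩
  · intro i j hij
    fin_cases i <;> fin_cases j <;>
      first
      | rfl
      | (exfalso; simp only [Matrix.cons_val_zero, Matrix.cons_val_one, Matrix.head_cons,
          Matrix.cons_val_fin_one, Matrix.cons_val_succ] at hij;
         first
         | exact hab.ne hij | exact hbc.ne hij | exact hcd.ne hij | exact hde.ne hij
         | exact hea.ne hij.symm | exact nac hij | exact nad hij | exact nbd hij
         | exact nbe hij | exact nce hij
         | exact hab.ne hij.symm | exact hbc.ne hij.symm | exact hcd.ne hij.symm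
         | exact hde.ne hij.symm | exact hea.ne hij
         | exact nac hij.symm | exact nad hij.symm | exact nbd hij.symm
         | exact nbe hij.symm | exact nce hij.symm)
  · intro i j
    change G.Adj (![a, b, c, d, e] i) (![a, b, c, d, e] j) ↔ _
    fin_cases i <;> fin_cases j <;>
      simp_all [cycleGraph_adj, G.adj_comm, Fin.ext_iff] <;>
      first
      | decide
      | exact iff_of_true hea (by decide)
      | exact iff_of_true hea.symm (by decide)

lemma clique_extend {V : Type*} [Fintype V] (G : SimpleGraph V) (W : Set V)
    (h : ∀ s : Finset V, ↑s ⊆ W → G.IsClique ↑s →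
      ∃ w, w ∉ s ∧ ∀ x ∈ s, G.Adj w x) :
    (G.induce W).cliqueNum < G.cliqueNum := by
  classical
  haveI : Fintype ↥W := Fintype.ofFinite _
  obtain ⟨s, hs⟩ := (G.induce W).exists_isNClique_cliqueNum
  set t : Finset V := s.image Subtype.val with ht
  have htW : ↑t ⊆ W := by
    intro x hx
    simp only [ht, Finset.coe_image, Set.mem_image] at hx
    obtain ⟨y, -, rfl⟩ := hx
    exact y.2
  have htc : G.IsClique ↑t := by
    intro x hx y hy hxy
    simp only [ht, Finset.coe_image, Set.mem_image, Finset.mem_coe] at hx hy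
    obtain ⟨x', hx', rfl⟩ := hx
    obtain ⟨y', hy', rfl⟩ := hy
    have := hs.1 hx' hy' (by simpa [Subtype.ext_iff] using hxy)
    simpa using this
  have htcard : t.card = (G.induce W).cliqueNum := by
    rw [ht, Finset.card_image_of_injective _ Subtype.val_injective, hs.2]
  obtain ⟨w, hw1, hw2⟩ := h t htW htc
  have hcl : G.IsNClique (t.card + 1) (insert w t) :=
    (⟨htc, rfl⟩ : G.IsNClique t.card t).insert hw2
  have h2 : (insert w t).card ≤ G.cliqueNum :=
    IsClique.card_le_cliqueNum (tc := hcl.1)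
  rw [Finset.card_insert_of_notMem hw1] at h2
  omega

/-- Let G have no 5-hole and ω(G) ≥ 2, and let n ≥ 1 be such that every induced
subgraph H of G with ω(H) < ω(G) satisfies χ(H) ≤ n. Then for every vertex v,
χ(N(v)) ≤ n and χ(N²(v)) ≤ n². -/
theorem stmt_19 {V : Type*} [Fintype V] (G : SimpleGraph V) (n : ℕ)
    (h5 : ¬ HasInducedCycle G 5)
    (hω : 2 ≤ G.cliqueNum)
    (hn : 1 ≤ n)
    (hind : ∀ W : Set V, (G.induce W).cliqueNum < G.cliqueNum →
      (G.induce W).chromaticNumber ≤ n)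
    (v : V) :
    (G.induce (G.neighborSet v)).chromaticNumber ≤ n ∧
      (G.induce (distSet G v 2)).chromaticNumber ≤ (n ^ 2 : ℕ) := by
  classical
  -- Part 1
  have part1 : (G.induce (G.neighborSet v)).chromaticNumber ≤ n := by
    apply hind
    apply clique_extend
    intro s hsW hsc
    refine ⟨v, fun hv => G.irrefl (hsW (Finset.mem_coe.mpr hv)), fun x hx =>
      hsW (Finset.mem_coe.mpr hx)⟩
  refine ⟨part1, ?_⟩
  set D := distSet G v 2 with hDdef
  have hDmem : ∀ u, u ∈ D ↔ G.dist v u = 2 := fun u => Iff.rfl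
  have hnadj : ∀ u ∈ D, ¬ G.Adj v u := by
    intro u hu h
    have := (dist_eq_one_iff_adj (G := G)).mpr h
    rw [hDmem] at hu; omega
  have hv2 : ∀ u ∈ D, ∃ w, G.Adj v w ∧ G.Adj w u := by
    intro u hu
    rw [hDmem] at hu
    have hr : G.Reachable v u := by
      have := G.dist_ne_zero_iff_ne_and_reachable (u := v) (v := u)
      exact (this.mp (by omega)).2
    obtain ⟨p, hp⟩ := hr.exists_walk_length_eq_dist
    rw [hu] at hp
    cases p with
    | nil => simp at hp
    | cons h q =>
      cases q with
      | nil => simp at hp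
      | cons h' r =>
        cases r with
        | nil => exact ⟨_, h, h'⟩
        | cons h'' r' => simp [SimpleGraph.Walk.length_cons] at hp
  choose w hw1 hw2 using hv2
  set ww : V → V := fun u => if h : u ∈ D then w u h else v with hwwdef
  have hww1 : ∀ u ∈ D, G.Adj v (ww u) := by
    intro u hu; simp only [hwwdef, dif_pos hu]; exact hw1 u hu
  have hww2 : ∀ u ∈ D, G.Adj (ww u) u := by
    intro u hu; simp only [hwwdef, dif_pos hu]; exact hw2 u hu
  obtain ⟨C⟩ := chromaticNumber_le_iff_colorable.mp part1
  set colC : V → Fin n := fun z =>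
    if h : z ∈ G.neighborSet v then C ⟨z, h⟩ else ⟨0, hn⟩ with hcolCdef
  have hcolC : ∀ z1 z2, G.Adj v z1 → G.Adj v z2 → G.Adj z1 z2 →
      colC z1 ≠ colC z2 := by
    intro z1 z2 h1 h2 h12
    simp only [hcolCdef, dif_pos (show z1 ∈ G.neighborSet v from h1),
      dif_pos (show z2 ∈ G.neighborSet v from h2)]
    exact C.valid (by simpa using h12)
  set W : Fin n → Set V := fun i => {u | u ∈ D ∧ colC (ww u) = i} with hWdef
  have lemA : ∀ (wx wy x y : V), G.Adj v wx → G.Adj v wy → x ∈ D → y ∈ D →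
      G.Adj wx x → G.Adj wy y → ¬ G.Adj wx wy → G.Adj x y → ¬ G.Adj wx y →
      G.Adj wy x := by
    intro wx wy x y hvwx hvwy hx hy hwxx hwyy hnww hxy hnwy
    by_contra hc
    exact h5 (hasC5 G v wx x y wy hvwx hwxx hxy hwyy.symm hvwy.symm
      (hnadj x hx) (hnadj y hy) hnwy hnww (fun h => hc h.symm))
  have key : ∀ i, (G.induce (W i)).cliqueNum < G.cliqueNum := by
    intro i
    apply clique_extend
    intro s hsW hsc
    rcases s.eq_empty_or_nonempty with rfl | hne
    · exact ⟨v, by simp, by simp⟩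
    set f : V → ℕ := fun z => (s.filter (fun y => G.Adj (ww z) y)).card with hfdef
    obtain ⟨x, hxs, hmax⟩ := s.exists_max_image f hne
    have hsD : ∀ z ∈ s, z ∈ D := fun z hz => (hsW (Finset.mem_coe.mpr hz)).1
    have hsI : ∀ z ∈ s, colC (ww z) = i := fun z hz => (hsW (Finset.mem_coe.mpr hz)).2
    have hadjall : ∀ y ∈ s, G.Adj (ww x) y := by
      by_contra hcon
      push_neg at hcon
      obtain ⟨y, hys, hny⟩ := hcon
      have hyD := hsD y hys
      have hyx : y ≠ x := by rintro rfl; exact hny (hww2 y hyD)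
      have hwne : ¬ G.Adj (ww x) (ww y) := by
        intro h
        exact hcolC _ _ (hww1 x (hsD x hxs)) (hww1 y hyD) h
          ((hsI x hxs).trans (hsI y hys).symm)
      have hsub : insert y (s.filter (fun z => G.Adj (ww x) z)) ⊆
          s.filter (fun z => G.Adj (ww y) z) := by
        intro z hz
        rcases Finset.mem_insert.mp hz with rfl | hz
        · exact Finset.mem_filter.mpr ⟨hys, hww2 z hyD⟩
        · obtain ⟨hzs, hadjz⟩ := Finset.mem_filter.mp hz
          have hzy : z ≠ y := by rintro rfl; exact hny hadjz
          have hzyadj : G.Adj z y :=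
            hsc (Finset.mem_coe.mpr hzs) (Finset.mem_coe.mpr hys) hzy
          exact Finset.mem_filter.mpr ⟨hzs,
            lemA (ww x) (ww y) z y (hww1 x (hsD x hxs)) (hww1 y hyD)
              (hsD z hzs) hyD hadjz (hww2 y hyD) hwne hzyadj hny⟩
      have hcard := Finset.card_le_card hsub
      rw [Finset.card_insert_of_notMem
        (fun h => hny (Finset.mem_filter.mp h).2)] at hcard
      have hstep : f x + 1 ≤ f y := hcard
      have := hmax y hys
      omega
    refine ⟨ww x, ?_, hadjall⟩
    intro hmem
    have h1 : G.dist v (ww x) = 1 := (dist_eq_one_iff_adj (G := G)).mpr (hww1 x (hsD x hxs))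
    have h2 := (hDmem _).mp (hsD _ hmem)
    omega
  have hWcol : ∀ i, Nonempty ((G.induce (W i)).Coloring (Fin n)) := fun i =>
    chromaticNumber_le_iff_colorable.mp (hind (W i) (key i))
  have Di := fun i => (hWcol i).some
  have congrDi : ∀ i j, i = j → ∀ (u : V) (p : u ∈ W i) (q : u ∈ W j),
      Di i ⟨u, p⟩ = Di j ⟨u, q⟩ := by rintro i _ rfl u p q; rfl
  have CC : (G.induce D).Coloring (Fin n × Fin n) := by
    refine Coloring.mk
      (fun u => (colC (ww u.1), Di (colC (ww u.1)) ⟨u.1, ⟨u.2, rfl⟩⟩)) ?_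
    intro a b hadj heq
    have hGadj : G.Adj a.1 b.1 := by simpa using hadj
    have h1 : colC (ww a.1) = colC (ww b.1) := congrArg Prod.fst heq
    have h2 := congrArg Prod.snd heq
    have q : b.1 ∈ W (colC (ww a.1)) := ⟨b.2, h1.symm⟩
    have hne := (Di (colC (ww a.1))).valid
      (show (G.induce (W (colC (ww a.1)))).Adj ⟨a.1, ⟨a.2, rfl⟩⟩ ⟨b.1, q⟩ from
        by simpa using hGadj)
    exact hne (h2.trans (congrDi (colC (ww b.1)) (colC (ww a.1)) h1.symm b.1
      ⟨b.2, rfl⟩ q))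
  have hcol2 : (G.induce D).Colorable (n * n) := by
    have := CC.colorable
    simpa using this
  have hfin := hcol2.chromaticNumber_le
  rw [show (n ^ 2 : ℕ) = n * n from sq n]
  exact hfin
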